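/- Let K be an algebraically closed field, n ≥ 1 an integer, and q ≥ 2 an integer. Suppose Φ and Σ are invertible n×n matrices over K satisfying Φ·Σ·Φ⁻¹ = Σ^q. Then for every eigenvalue λ of Σ (i.e. every root of the characteristic polynomial of Σ) there exists an integer i with 1 ≤ i ≤ n such that λ^{qⁱ − 1} = 1. In particular, every eigenvalue of Σ is an M-th root of unity, where M = ∏_{i=1}^{n} (qⁱ − 1). -/

import Mathlib

open Matrix Polynomial

/-- Membership in the spectrum of a matrix over a field is equivalent to being a root of the
characteristic polynomial. -/
lemma aux_mem_spectrum_iff_isRoot_charpoly {K : Type*} [Field K] {n : ℕ}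
    (A : Matrix (Fin n) (Fin n) K) (lam : K) :
    lam ∈ spectrum K A ↔ (Matrix.charpoly A).IsRoot lam := by
  have h1 : (Matrix.charpoly A).eval lam = (Matrix.scalar (Fin n) lam - A).det := by
    rw [Matrix.charpoly, _root_.eval_det, matPolyEquiv_charmatrix]
    simp
  have h2 : algebraMap K (Matrix (Fin n) (Fin n) K) lam = Matrix.scalar (Fin n) lam := rfl
  rw [spectrum.mem_iff, Polynomial.IsRoot.def, h1, h2, Matrix.isUnit_iff_isUnit_det,
    isUnit_iff_ne_zero, not_not]

/-- If `Φ·Σ·Φ⁻¹ = Σ^q` for invertible matrices over an algebraically closed field, then every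
eigenvalue `λ` of `Σ` satisfies `λ^(qⁱ − 1) = 1` for some `1 ≤ i ≤ n`; in particular
`λ^M = 1` where `M = ∏_{i=1}^{n} (qⁱ − 1)`. -/
theorem eigenvalue_root_of_unity_of_conj_pow
    (K : Type*) [Field K] [IsAlgClosed K]
    (n : ℕ) (hn : 1 ≤ n) (q : ℕ) (hq : 2 ≤ q)
    (Phi Sig : Matrix (Fin n) (Fin n) K) (hPhi : IsUnit Phi) (hSig : IsUnit Sig)
    (hconj : Phi * Sig * Phi⁻¹ = Sig ^ q) :
    ∀ lam : K, (Matrix.charpoly Sig).IsRoot lam →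
      (∃ i : ℕ, 1 ≤ i ∧ i ≤ n ∧ lam ^ (q ^ i - 1) = 1) ∧
      lam ^ (∏ i ∈ Finset.Icc 1 n, (q ^ i - 1)) = 1 := by
  classical
  intro lam hlam
  have hq0 : 0 < q := by omega
  set E : Set K := spectrum K Sig with hE
  have hlamE : lam ∈ E := (aux_mem_spectrum_iff_isRoot_charpoly Sig lam).mpr hlam
  -- the spectrum is invariant under conjugation, and spectrum of a power is the power image
  have hconj' : spectrum K (Sig ^ q) = E := by
    have h := spectrum.units_conjugate (R := K) (a := Sig) (u := hPhi.unit)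
    rw [Matrix.coe_units_inv, hPhi.unit_spec] at h
    rw [← hconj]
    exact h
  have hpow : spectrum K (Sig ^ q) = (· ^ q) '' E := spectrum.map_pow_of_pos Sig hq0
  set f : K → K := fun x => x ^ q with hf
  have key : f '' E = E := by rw [← hpow]; exact hconj'
  have hmaps : Set.MapsTo f E E := Set.mapsTo_iff_image_subset.mpr key.subset
  have hsurj : Set.SurjOn f E E := key.superset
  -- E is finite with at most n elements
  have hcpne : Matrix.charpoly Sig ≠ 0 := (Matrix.charpoly_monic Sig).ne_zero
  have hsub : E ⊆ ↑(Matrix.charpoly Sig).roots.toFinset := by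
    intro x hx
    simp only [Finset.coe_sort_coe, Multiset.mem_toFinset, Finset.mem_coe]
    exact Polynomial.mem_roots'.mpr ⟨hcpne, (aux_mem_spectrum_iff_isRoot_charpoly Sig x).mp hx⟩
  have hEfin : E.Finite := Set.Finite.subset (Finset.finite_toSet _) hsub
  have hcard : hEfin.toFinset.card ≤ n := by
    calc hEfin.toFinset.card ≤ (Matrix.charpoly Sig).roots.toFinset.card := by
          apply Finset.card_le_card
          intro x hx
          exact hsub (hEfin.mem_toFinset.mp hx)
      _ ≤ Multiset.card (Matrix.charpoly Sig).roots := Multiset.toFinset_card_le _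
      _ ≤ (Matrix.charpoly Sig).natDegree := Polynomial.card_roots' _
      _ = n := by rw [Matrix.charpoly_natDegree_eq_dim, Fintype.card_fin]
  -- f is a bijection of E
  have hbij : Set.BijOn f E E := (Set.Finite.surjOn_iff_bijOn_of_mapsTo hEfin hmaps).mp hsurj
  have hinjOn : Set.InjOn f E := hbij.injOn
  have hmaps_it : ∀ m : ℕ, Set.MapsTo f^[m] E E := fun m => hmaps.iterate m
  have hinj_it : ∀ m : ℕ, Set.InjOn f^[m] E := by
    intro m
    induction m with
    | zero =>
      simp only [Function.iterate_zero]
      exact fun a _ b _ h => h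
    | succ m ih =>
      rw [Function.iterate_succ']
      exact hinjOn.comp ih (hmaps_it m)
  have hit_pow : ∀ (m : ℕ) (x : K), f^[m] x = x ^ q ^ m := by
    intro m
    induction m with
    | zero => intro x; simp
    | succ m ih =>
      intro x
      rw [Function.iterate_succ_apply', ih]
      show (x ^ q ^ m) ^ q = x ^ q ^ (m + 1)
      rw [← pow_mul, pow_succ]
  -- pigeonhole on the iterates of lam
  have hpigeon : ∃ i ∈ Finset.range (n + 1), ∃ j ∈ Finset.range (n + 1),
      i ≠ j ∧ f^[i] lam = f^[j] lam :=
    Finset.exists_ne_map_eq_of_card_lt_of_maps_to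
      (t := hEfin.toFinset)
      (by rw [Finset.card_range]; omega)
      (fun a _ => hEfin.mem_toFinset.mpr (hmaps_it a hlamE))
  obtain ⟨i, hi, j, hj, hij, hfij⟩ := hpigeon
  rw [Finset.mem_range] at hi hj
  -- wlog i < j
  have hfix : ∃ m : ℕ, 1 ≤ m ∧ m ≤ n ∧ f^[m] lam = lam := by
    rcases Nat.lt_or_ge i j with h | h
    · refine ⟨j - i, by omega, by omega, ?_⟩
      apply hinj_it i (hmaps_it (j - i) hlamE) hlamE
      rw [← Function.iterate_add_apply]
      rw [show i + (j - i) = j by omega]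
      exact hfij.symm
    · have h' : j < i := by omega
      refine ⟨i - j, by omega, by omega, ?_⟩
      apply hinj_it j (hmaps_it (i - j) hlamE) hlamE
      rw [← Function.iterate_add_apply]
      rw [show j + (i - j) = i by omega]
      exact hfij
  obtain ⟨m, hm1, hmn, hfixm⟩ := hfix
  rw [hit_pow] at hfixm
  -- lam is nonzero
  have hlam0 : lam ≠ 0 := by
    intro h0
    rw [h0] at hlamE
    exact (spectrum.zero_mem_iff K).mp hlamE hSig
  -- conclude lam ^ (q ^ m - 1) = 1
  have hqm1 : 1 ≤ q ^ m := Nat.one_le_pow _ _ hq0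
  have hkey : lam ^ (q ^ m - 1) = 1 := by
    have h1 : lam ^ (q ^ m - 1) * lam = 1 * lam := by
      rw [one_mul, ← pow_succ, show q ^ m - 1 + 1 = q ^ m by omega, hfixm]
    exact mul_right_cancel₀ hlam0 h1
  refine ⟨⟨m, hm1, hmn, hkey⟩, ?_⟩
  obtain ⟨c, hc⟩ := Finset.dvd_prod_of_mem (fun i => q ^ i - 1)
    (Finset.mem_Icc.mpr ⟨hm1, hmn⟩)
  rw [hc, pow_mul, hkey, one_pow]
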